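/- Let q be a power of a prime, let n ≥ 2, let h(x) ∈ F_q[x], and let L be any subfield of F_{q^n} containing the image h(F_{q^n}^×). Define S(x) = (1 − h(x)^{#L^×}) mod (x^{q^n−1} − 1) ∈ F_q[x], and write S(x) = Σ_{i=0}^{q^n−2} s_i x^i. If the cyclic sequence (s_i)_{i=0}^{q^n−2}, viewed as a function Z/(q^n−1)Z → F_q, has least period r with r not dividing (q^n−1)/Φ_n(q), then h(x) has an irreducible factor of degree n over F_q. -/

import Mathlib

open scoped Classical

noncomputable section

/-- `g` is `r`-periodic on `Z/NZ`. -/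
def IsPeriodOf {N : ℕ} {α : Type*} (g : ZMod N → α) (r : ℕ) : Prop :=
  ∀ m : ZMod N, g (m + (r : ZMod N)) = g m

/-- `r` is the least period of `g`. -/
def IsLeastPeriod {N : ℕ} {α : Type*} (g : ZMod N → α) (r : ℕ) : Prop :=
  0 < r ∧ IsPeriodOf g r ∧ ∀ s : ℕ, 0 < s → IsPeriodOf g s → r ≤ s

open Polynomial IntermediateField

lemma periodOf_zsmul {N : ℕ} {α : Type*} {g : ZMod N → α} {a : ℕ}
    (ha : IsPeriodOf g a) (z : ℤ) (m : ZMod N) : g (m + z * (a : ZMod N)) = g m := by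
  induction z using Int.induction_on with
  | zero => simp
  | succ k ih =>
      have key := ha (m + (((k : ℤ)) : ZMod N) * (a : ZMod N))
      have e : m + (((k : ℤ) + 1 : ℤ) : ZMod N) * (a : ZMod N)
          = m + (((k : ℤ)) : ZMod N) * (a : ZMod N) + (a : ZMod N) := by push_cast; ring
      rw [e, key, ih]
  | pred k ih =>
      have key := ha (m + ((-(k : ℤ) - 1 : ℤ) : ZMod N) * (a : ZMod N))
      have e : m + ((-(k : ℤ) - 1 : ℤ) : ZMod N) * (a : ZMod N) + (a : ZMod N)
          = m + ((-(k : ℤ) : ℤ) : ZMod N) * (a : ZMod N) := by push_cast; ring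
      rw [e] at key
      exact key.symm.trans ih

lemma periodOf_gcd {N : ℕ} {α : Type*} {g : ZMod N → α} {a b : ℕ}
    (ha : IsPeriodOf g a) (hb : IsPeriodOf g b) : IsPeriodOf g (Nat.gcd a b) := by
  intro m
  have hbez : ((Nat.gcd a b : ℤ) : ZMod N)
      = (a : ZMod N) * ((Nat.gcdA a b : ℤ) : ZMod N) + (b : ZMod N) * ((Nat.gcdB a b : ℤ) : ZMod N) := by
    have := Nat.gcd_eq_gcd_ab a b
    calc ((Nat.gcd a b : ℤ) : ZMod N) = (((a : ℤ) * Nat.gcdA a b + (b : ℤ) * Nat.gcdB a b : ℤ) : ZMod N) := by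
          rw [← this]
      _ = _ := by push_cast; ring
  have h1 : ((Nat.gcd a b : ℕ) : ZMod N) = ((Nat.gcd a b : ℤ) : ZMod N) := by push_cast; ring
  rw [h1, hbez]
  have := periodOf_zsmul ha (Nat.gcdA a b) m
  rw [show (m + ((a:ZMod N) * ((Nat.gcdA a b : ℤ) : ZMod N) + (b:ZMod N) * ((Nat.gcdB a b : ℤ) : ZMod N)))
      = (m + (Nat.gcdA a b : ℤ) * (a : ZMod N)) + (Nat.gcdB a b : ℤ) * (b : ZMod N) by push_cast; ring]
  rw [periodOf_zsmul hb, periodOf_zsmul ha]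

lemma leastPeriod_dvd {N : ℕ} {α : Type*} {g : ZMod N → α} {r s : ℕ}
    (hr : IsLeastPeriod g r) (hs : 0 < s) (hps : IsPeriodOf g s) : r ∣ s := by
  obtain ⟨hr0, hrp, hmin⟩ := hr
  have hg := periodOf_gcd hrp hps
  have hgpos : 0 < Nat.gcd r s := Nat.gcd_pos_of_pos_left s hr0
  have hle : r ≤ Nat.gcd r s := hmin _ hgpos hg
  have hge : Nat.gcd r s ≤ r := Nat.le_of_dvd hr0 (Nat.gcd_dvd_left r s)
  have : Nat.gcd r s = r := le_antisymm hge hle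
  rw [← this]; exact Nat.gcd_dvd_right r s

lemma periodOf_coeff {F : Type*} [Field F] {N M : ℕ} [NeZero N] (hM : 0 < M) (hMN : M ≤ N)
    {S : Polynomial F} (hdeg : S.degree < (N : ℕ))
    (hdvd : X ^ N - 1 ∣ (X ^ M - 1) * S) :
    IsPeriodOf (fun i : ZMod N => S.coeff i.val) M := by
  have hN : 0 < N := Nat.pos_of_ne_zero (NeZero.ne N)
  rcases eq_or_lt_of_le hMN with hMN' | hMN'
  · subst hMN'
    intro m; simp [ZMod.natCast_self]
  by_cases hS0 : S = 0
  · intro m; simp [hS0]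
  have hSdeg : S.natDegree < N := (natDegree_lt_iff_degree_lt hS0).mpr hdeg
  obtain ⟨T, hT⟩ := hdvd
  have hXM : (X ^ M - 1 : Polynomial F) ≠ 0 := by
    simpa using (monic_X_pow_sub_C (1 : F) hM.ne').ne_zero
  have hXN : (X ^ N - 1 : Polynomial F) ≠ 0 := by
    simpa using (monic_X_pow_sub_C (1 : F) hN.ne').ne_zero
  have hT0 : T ≠ 0 := by
    rintro rfl
    rw [mul_zero] at hT
    exact (mul_ne_zero hXM hS0) hT
  have hTdeg : T.natDegree < M := by
    have h1 : ((X ^ M - 1) * S).natDegree = M + S.natDegree := by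
      rw [natDegree_mul hXM hS0]
      congr 1
      simpa using natDegree_X_pow_sub_C (n := M) (r := (1 : F))
    have h2 : ((X ^ N - 1) * T).natDegree = N + T.natDegree := by
      rw [natDegree_mul hXN hT0]
      congr 1
      simpa using natDegree_X_pow_sub_C (n := N) (r := (1 : F))
    have := h1 ▸ h2 ▸ congrArg natDegree hT
    omega
  have hT' : S * X ^ M - S = T * X ^ N - T := by linear_combination hT
  have key : ∀ j : ℕ, (if M ≤ j then S.coeff (j - M) else 0) - S.coeff j
      = (if N ≤ j then T.coeff (j - N) else 0) - T.coeff j := by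
    intro j
    have := congrArg (fun p : Polynomial F => p.coeff j) hT'
    simpa [coeff_sub, coeff_mul_X_pow'] using this
  intro m
  have hv : m.val < N := ZMod.val_lt m
  have hval : (m + (M : ZMod N)).val = (m.val + M) % N := by
    rw [ZMod.val_add, ZMod.val_natCast, Nat.mod_eq_of_lt hMN']
  show S.coeff (m + (M : ZMod N)).val = S.coeff m.val
  by_cases hc : m.val + M < N
  · have hj := key (m.val + M)
    rw [if_pos (by omega), if_neg (by omega)] at hj
    have hTj : T.coeff (m.val + M) = 0 := coeff_eq_zero_of_natDegree_lt (by omega)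
    have hmm : m.val + M - M = m.val := by omega
    rw [hmm, hTj] at hj
    have hval' : (m + (M : ZMod N)).val = m.val + M := by rw [hval, Nat.mod_eq_of_lt hc]
    rw [hval']
    exact (sub_eq_zero.mp (by simpa using hj)).symm
  · have hle : N ≤ m.val + M := by omega
    have hlt : m.val + M - N < N := by omega
    have hval2 : (m + (M : ZMod N)).val = m.val + M - N := by
      rw [hval, Nat.mod_eq_sub_mod hle, Nat.mod_eq_of_lt hlt]
    rw [hval2]
    have h1 := key (m.val + M - N)
    rw [if_neg (by omega), if_neg (by omega)] at h1
    have h1' : S.coeff (m.val + M - N) = T.coeff (m.val + M - N) := by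
      simpa using h1
    have h2 := key (m.val + M - N + N)
    rw [if_pos (by omega), if_pos (by omega)] at h2
    have e1 : S.coeff (m.val + M - N + N) = 0 := coeff_eq_zero_of_natDegree_lt (by omega)
    have e2 : T.coeff (m.val + M - N + N) = 0 := coeff_eq_zero_of_natDegree_lt (by omega)
    have e3 : m.val + M - N + N - M = m.val := by omega
    have e4 : m.val + M - N + N - N = m.val + M - N := by omega
    rw [e1, e2, e3, e4] at h2
    have h2' : S.coeff m.val = T.coeff (m.val + M - N) := by simpa using h2
    rw [h2']
    exact h1'

lemma finset_prod_X_sub_C_dvd {F : Type*} [Field F] (s : Finset F) {p : Polynomial F}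
    (hp : p ≠ 0) (hroot : ∀ a ∈ s, p.eval a = 0) :
    (∏ a ∈ s, (X - C a)) ∣ p := by
  have hle : s.val ≤ p.roots := by
    rw [Multiset.le_iff_count]
    intro a
    by_cases ha : a ∈ s
    · have h1 : s.val.count a = 1 := Multiset.count_eq_one_of_mem s.nodup ha
      rw [h1, count_roots]
      exact (rootMultiplicity_pos hp).mpr (hroot a ha)
    · simp [Multiset.count_eq_zero_of_notMem (by exact ha)]
  have h2 := (Multiset.prod_X_sub_C_dvd_iff_le_roots hp s.val).mpr hle
  rwa [Finset.prod_eq_multiset_prod]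

lemma X_pow_card_sub_one_eq_prod {F : Type*} [Field F] [Fintype F] :
    (X ^ (Fintype.card F - 1) - 1 : Polynomial F)
      = ∏ a ∈ Finset.univ.erase (0 : F), (X - C a) := by
  set N := Fintype.card F - 1 with hN
  have hN0 : 0 < N := by
    have := Fintype.one_lt_card_iff_nontrivial.mpr (inferInstance : Nontrivial F)
    omega
  have hXN : (X ^ N - 1 : Polynomial F) ≠ 0 := by
    simpa using (monic_X_pow_sub_C (1 : F) hN0.ne').ne_zero
  have hdvd : (∏ a ∈ Finset.univ.erase (0 : F), (X - C a)) ∣ (X ^ N - 1 : Polynomial F) := by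
    apply finset_prod_X_sub_C_dvd _ hXN
    intro a ha
    have ha0 : a ≠ 0 := Finset.ne_of_mem_erase ha
    have := FiniteField.pow_card_sub_one_eq_one a ha0
    simp [hN, this]
  symm
  apply eq_of_dvd_of_natDegree_le_of_leadingCoeff hdvd
  · have hmonic : (∏ a ∈ Finset.univ.erase (0 : F), (X - C a)).Monic :=
      monic_prod_of_monic _ _ fun a _ => monic_X_sub_C a
    have hdegprod : (∏ a ∈ Finset.univ.erase (0 : F), (X - C a)).natDegree
        = (Finset.univ.erase (0 : F)).card := by
      rw [natDegree_prod _ _ fun a _ => X_sub_C_ne_zero a]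
      simp
    have hcard : (Finset.univ.erase (0 : F)).card = N := by
      rw [Finset.card_erase_of_mem (Finset.mem_univ 0), Finset.card_univ]
    have hdegN : (X ^ N - 1 : Polynomial F).natDegree = N := by
      simpa using natDegree_X_pow_sub_C (n := N) (r := (1 : F))
    rw [hdegprod, hcard, hdegN]
  · have hmonic : (∏ a ∈ Finset.univ.erase (0 : F), (X - C a)).Monic :=
      monic_prod_of_monic _ _ fun a _ => monic_X_sub_C a
    have hmonic2 : (X ^ N - 1 : Polynomial F).Monic := by
      simpa using monic_X_pow_sub_C (1 : F) hN0.ne'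
    rw [hmonic.leadingCoeff, hmonic2.leadingCoeff]

lemma pow_card_pow_minpoly_natDegree_sub_one_eq_one
    (Fq Fqn : Type) [Field Fq] [Fintype Fq] [Field Fqn] [Fintype Fqn] [Algebra Fq Fqn]
    (a : Fqn) (ha : a ≠ 0) :
    a ^ (Fintype.card Fq ^ (minpoly Fq a).natDegree - 1) = 1 := by
  have hint : IsIntegral Fq a := IsIntegral.of_finite Fq a
  haveI : Fintype Fq⟮a⟯ := Fintype.ofFinite _
  have hcard : Fintype.card Fq⟮a⟯ = Fintype.card Fq ^ (minpoly Fq a).natDegree := by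
    rw [Module.card_eq_pow_finrank (K := Fq), IntermediateField.adjoin.finrank hint]
  have hgen : ((AdjoinSimple.gen Fq a : Fq⟮a⟯) : Fqn) = a := AdjoinSimple.coe_gen Fq a
  have hgen0 : (AdjoinSimple.gen Fq a : Fq⟮a⟯) ≠ 0 := by
    intro h0
    apply ha
    rw [← hgen, h0]
    simp
  have hpow := FiniteField.pow_card_sub_one_eq_one (AdjoinSimple.gen Fq a) hgen0
  have := congrArg (fun x : Fq⟮a⟯ => (x : Fqn)) hpow
  simp only [SubmonoidClass.coe_pow, hgen] at this
  rw [hcard] at this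
  simpa using this

section NumberTheory

variable (q n : ℕ)

lemma cyclo_toNat_dvd (hq2 : 2 ≤ q) (hn : 0 < n) :
    ((Polynomial.cyclotomic n ℤ).eval (q : ℤ)).toNat ∣ q ^ n - 1 := by
  have hΦpos : 0 < (Polynomial.cyclotomic n ℤ).eval (q : ℤ) :=
    cyclotomic_pos' n (by exact_mod_cast hq2)
  have hdvd : (Polynomial.cyclotomic n ℤ).eval (q : ℤ) ∣ (q : ℤ) ^ n - 1 := by
    have := eval_dvd (x := (q : ℤ)) (cyclotomic.dvd_X_pow_sub_one n ℤ)
    simpa using this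
  have hcast : ((q ^ n - 1 : ℕ) : ℤ) = (q : ℤ) ^ n - 1 := by
    have : 1 ≤ q ^ n := Nat.one_le_pow _ _ (by omega)
    push_cast [this]
    ring
  rw [← Int.natCast_dvd_natCast, Int.toNat_of_nonneg hΦpos.le, hcast]
  exact hdvd

lemma pow_sub_one_dvd_div (hq2 : 2 ≤ q) {d : ℕ} (hd : d ∣ n) (hdn : d < n) :
    q ^ d - 1 ∣ (q ^ n - 1) / ((Polynomial.cyclotomic n ℤ).eval (q : ℤ)).toNat := by
  have hn : 0 < n := by omega
  have hΦpos : 0 < (Polynomial.cyclotomic n ℤ).eval (q : ℤ) :=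
    cyclotomic_pos' n (by exact_mod_cast hq2)
  rw [Nat.dvd_div_iff_mul_dvd (cyclo_toNat_dvd q n hq2 hn)]
  have hint : ((X ^ d - 1) * cyclotomic n ℤ : Polynomial ℤ) ∣ X ^ n - 1 :=
    X_pow_sub_one_mul_cyclotomic_dvd_X_pow_sub_one_of_dvd ℤ
      (Nat.mem_properDivisors.mpr ⟨hd, hdn⟩)
  have heval : ((q : ℤ) ^ d - 1) * (Polynomial.cyclotomic n ℤ).eval (q : ℤ)
      ∣ (q : ℤ) ^ n - 1 := by
    have := eval_dvd (x := (q : ℤ)) hint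
    simpa using this
  have hc1 : ((q ^ d - 1 : ℕ) : ℤ) = (q : ℤ) ^ d - 1 := by
    have : 1 ≤ q ^ d := Nat.one_le_pow _ _ (by omega)
    push_cast [this]; ring
  have hc2 : ((q ^ n - 1 : ℕ) : ℤ) = (q : ℤ) ^ n - 1 := by
    have : 1 ≤ q ^ n := Nat.one_le_pow _ _ (by omega)
    push_cast [this]; ring
  rw [← Int.natCast_dvd_natCast]
  push_cast
  rw [hc1, hc2, Int.toNat_of_nonneg hΦpos.le, mul_comm]
  exact heval

end NumberTheory

/-- Lemma 1.3: if the cyclic sequence of coefficients of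
`S(x) = (1 - h(x)^{#Lˣ}) mod (x^{q^n-1} - 1)` has least period `r` with
`r ∤ (q^n-1)/Φ_n(q)`, then `h` has an irreducible factor of degree `n` over `F_q`. -/
theorem irreducible_factor_of_degree_n
    (q n : ℕ) (hn : 2 ≤ n)
    (Fq Fqn : Type) [Field Fq] [Fintype Fq] [Field Fqn] [Fintype Fqn]
    [Algebra Fq Fqn]
    (hq : Fintype.card Fq = q) (hqn : Fintype.card Fqn = q ^ n)
    [NeZero (q ^ n - 1)]
    (h : Polynomial Fq) (L : Subfield Fqn)
    (hL : ∀ x : Fqn, x ≠ 0 → Polynomial.aeval x h ∈ L)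
    (S : Polynomial Fq)
    (hS : S = (1 - h ^ Nat.card Lˣ) % (Polynomial.X ^ (q ^ n - 1) - 1))
    (r : ℕ)
    (hr : IsLeastPeriod (fun i : ZMod (q ^ n - 1) => S.coeff i.val) r)
    (hdvd : ¬ r ∣ (q ^ n - 1) / ((Polynomial.cyclotomic n ℤ).eval (q : ℤ)).toNat) :
    ∃ P : Polynomial Fq, Irreducible P ∧ P.natDegree = n ∧ P ∣ h := by
  by_contra hcon
  push_neg at hcon
  -- basic numerology
  have hq2 : 2 ≤ q := hq ▸ Fintype.one_lt_card
  have hN0 : 0 < q ^ n - 1 := Nat.pos_of_ne_zero (NeZero.ne _)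
  set N := q ^ n - 1 with hNdef
  set Φ := ((Polynomial.cyclotomic n ℤ).eval (q : ℤ)).toNat with hΦdef
  set M := N / Φ with hMdef
  have hΦdvd : Φ ∣ N := cyclo_toNat_dvd q n hq2 (by omega)
  have hΦpos : 0 < Φ := by
    have := cyclotomic_pos' (R := ℤ) n (x := (q : ℤ)) (by exact_mod_cast hq2)
    omega
  have hM0 : 0 < M := Nat.div_pos (Nat.le_of_dvd hN0 hΦdvd) hΦpos
  have hMN : M ≤ N := Nat.le_of_dvd hN0 (Nat.div_dvd_of_dvd hΦdvd)
  -- the finrank of Fqn over Fq is n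
  have hrank : Module.finrank Fq Fqn = n := by
    have hc : Fintype.card Fqn = Fintype.card Fq ^ Module.finrank Fq Fqn :=
      Module.card_eq_pow_finrank (K := Fq)
    rw [hq, hqn] at hc
    exact (Nat.pow_right_injective hq2 hc.symm)
  -- S as modByMonic
  have hmonicN : (X ^ N - 1 : Polynomial Fq).Monic := by
    simpa using monic_X_pow_sub_C (1 : Fq) hN0.ne'
  have hmod : S = (1 - h ^ Nat.card Lˣ) %ₘ (X ^ N - 1) := by
    rw [hS, Polynomial.mod_def, hmonicN.leadingCoeff]
    simp
  have hdegN : (X ^ N - 1 : Polynomial Fq).degree = (N : ℕ) := by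
    simpa using degree_X_pow_sub_C hN0 (1 : Fq)
  have hdeg : S.degree < (N : ℕ) := by
    rw [hmod, ← hdegN]
    exact degree_modByMonic_lt _ hmonicN
  -- the period M
  have hperiod : IsPeriodOf (fun i : ZMod N => S.coeff i.val) M := by
    by_cases hz : (1 : Polynomial Fq) - h ^ Nat.card Lˣ = 0
    · have hS0 : S = 0 := by rw [hmod, hz, zero_modByMonic]
      intro m; simp [hS0]
    · -- main divisibility
      have hXM : (X ^ M - 1 : Polynomial Fq) ≠ 0 := by
        simpa using (monic_X_pow_sub_C (1 : Fq) hM0.ne').ne_zero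
      have hA : (X ^ N - 1 : Polynomial Fq) ∣ (X ^ M - 1) * (1 - h ^ Nat.card Lˣ) := by
        rw [← map_dvd_map' (algebraMap Fq Fqn)]
        have hmapN : (X ^ N - 1 : Polynomial Fq).map (algebraMap Fq Fqn)
            = (X ^ N - 1 : Polynomial Fqn) := by
          simp
        rw [hmapN]
        have hprod := X_pow_card_sub_one_eq_prod (F := Fqn)
        rw [hqn] at hprod
        rw [hprod]
        apply finset_prod_X_sub_C_dvd
        · exact (Polynomial.map_ne_zero_iff (algebraMap Fq Fqn).injective).mpr
            (mul_ne_zero hXM hz)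
        · intro a ha
          have ha0 : a ≠ 0 := Finset.ne_of_mem_erase ha
          rw [eval_map, ← aeval_def]
          rw [map_mul]
          by_cases hha : Polynomial.aeval a h = 0
          · -- a is a root of h : a^M = 1
            have hint : IsIntegral Fq a := IsIntegral.of_finite Fq a
            have hirr := minpoly.irreducible hint
            have hdvdh : minpoly Fq a ∣ h := minpoly.dvd Fq a hha
            have hdn : (minpoly Fq a).natDegree ∣ n := hrank ▸ minpoly.degree_dvd hint
            have hdne : (minpoly Fq a).natDegree ≠ n := fun he => hcon _ hirr he hdvdh
            have hdlt : (minpoly Fq a).natDegree < n :=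
              lt_of_le_of_ne (Nat.le_of_dvd (by omega) hdn) hdne
            have hdd : q ^ (minpoly Fq a).natDegree - 1 ∣ M :=
              pow_sub_one_dvd_div q n hq2 hdn hdlt
            have hpow := pow_card_pow_minpoly_natDegree_sub_one_eq_one Fq Fqn a ha0
            rw [hq] at hpow
            obtain ⟨k, hk⟩ := hdd
            have haM : a ^ M = 1 := by
              rw [hk, pow_mul, hpow, one_pow]
            have : Polynomial.aeval a (X ^ M - 1 : Polynomial Fq) = 0 := by
              simp [haM]
            rw [this, zero_mul]
          · -- h(a) is a nonzero element of L
            have hyL : Polynomial.aeval a h ∈ L := hL a ha0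
            have hy0 : (⟨Polynomial.aeval a h, hyL⟩ : L) ≠ 0 := by
              simpa [Subtype.ext_iff] using hha
            set u : Lˣ := Units.mk0 _ hy0 with hu
            have hu1 : u ^ Nat.card Lˣ = 1 := pow_card_eq_one'
            have h2 : ((u : L) : Fqn) ^ Nat.card Lˣ = 1 := by
              rw [← SubmonoidClass.coe_pow, ← Units.val_pow_eq_pow_val, hu1]
              simp
            have h3 : ((u : L) : Fqn) = Polynomial.aeval a h := rfl
            rw [h3] at h2
            have : (Polynomial.aeval a h) ^ Nat.card Lˣ = 1 := h2
            have : Polynomial.aeval a ((1 : Polynomial Fq) - h ^ Nat.card Lˣ) = 0 := by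
              rw [map_sub, map_one, map_pow, h2, sub_self]
            rw [this, mul_zero]
      have hdvd2 : (X ^ N - 1 : Polynomial Fq) ∣ (X ^ M - 1) * S := by
        have hsub : (X ^ M - 1) * S
            = (X ^ M - 1) * (1 - h ^ Nat.card Lˣ)
              - (X ^ N - 1) * ((X ^ M - 1) * ((1 - h ^ Nat.card Lˣ) /ₘ (X ^ N - 1))) := by
          rw [hmod, modByMonic_eq_sub_mul_div _ (X ^ N - 1)]
          ring
        rw [hsub]
        exact dvd_sub hA ⟨_, rfl⟩
      exact periodOf_coeff hM0 hMN hdeg hdvd2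
  exact hdvd (leastPeriod_dvd hr hM0 hperiod)
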